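/- Let H and H' be complex Hilbert spaces, let N : H → H be a compact linear operator, and let A : H → H' be a bounded linear operator such that ‖A f‖² ≤ Re⟨f, N f⟩ for all f ∈ H. Then A is a compact operator. -/

import Mathlib

/-- Key inequality: `‖A f - A g‖ ^ 2 ≤ ‖f - g‖ * ‖N f - N g‖`. -/
lemma key_ineq
    {H H' : Type*}
    [NormedAddCommGroup H] [InnerProductSpace ℂ H]
    [NormedAddCommGroup H'] [InnerProductSpace ℂ H']
    (N : H →L[ℂ] H) (A : H →L[ℂ] H')
    (hA : ∀ f : H, ‖A f‖ ^ 2 ≤ (inner ℂ f (N f) : ℂ).re)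
    (f g : H) : ‖A f - A g‖ ^ 2 ≤ ‖f - g‖ * ‖N f - N g‖ := by
  have h1 : ‖A (f - g)‖ ^ 2 ≤ (inner ℂ (f - g) (N (f - g)) : ℂ).re := hA (f - g)
  have h2 : (inner ℂ (f - g) (N (f - g)) : ℂ).re ≤ ‖(inner ℂ (f - g) (N (f - g)) : ℂ)‖ :=
    Complex.re_le_norm _
  have h3 : ‖(inner ℂ (f - g) (N (f - g)) : ℂ)‖ ≤ ‖f - g‖ * ‖N (f - g)‖ :=
    norm_inner_le_norm _ _
  have := h1.trans (h2.trans h3)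
  simpa [map_sub] using this

/-- If `N` is a compact operator on a Hilbert space `H` and a bounded operator
`A : H → H'` satisfies `‖A f‖² ≤ Re⟨f, N f⟩` for all `f`, then `A` is compact. -/
theorem compact_of_sq_le_inner_compact
    {H H' : Type*}
    [NormedAddCommGroup H] [InnerProductSpace ℂ H] [CompleteSpace H]
    [NormedAddCommGroup H'] [InnerProductSpace ℂ H'] [CompleteSpace H']
    (N : H →L[ℂ] H) (A : H →L[ℂ] H')
    (hN : IsCompactOperator N)
    (hA : ∀ f : H, ‖A f‖ ^ 2 ≤ (inner ℂ f (N f) : ℂ).re) :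
    IsCompactOperator A := by
  rw [← ContinuousLinearMap.coe_coe A, isCompactOperator_iff_isCompact_closure_image_closedBall (𝕜₁ := ℂ)
    (A : H →ₗ[ℂ] H') one_pos]
  refine TotallyBounded.isCompact_of_isClosed ?_ isClosed_closure
  refine TotallyBounded.closure ?_
  rw [Metric.totallyBounded_iff]
  intro ε hε
  -- N '' closedBall 0 1 is totally bounded
  have hNtb : TotallyBounded (N '' Metric.closedBall (0 : H) 1) :=
    (hN.isCompact_closure_image_closedBall (𝕜₁ := ℂ) 1).totallyBounded.subset
      subset_closure
  set δ : ℝ := ε ^ 2 / 4 with hδdef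
  have hδ : 0 < δ := by positivity
  obtain ⟨t, hts, htfin, hcover⟩ :=
    totallyBounded_iff_subset.mp hNtb _ (Metric.dist_mem_uniformity hδ)
  -- choose preimages for each point of t
  have hchoice : ∀ y ∈ t, ∃ x ∈ Metric.closedBall (0 : H) 1, N x = y := by
    intro y hy
    obtain ⟨x, hx, hxy⟩ := hts hy
    exact ⟨x, hx, hxy⟩
  choose! pre hpre1 hpre2 using hchoice
  refine ⟨A '' (pre '' t), (htfin.image pre).image A, ?_⟩
  rintro _ ⟨f, hf, rfl⟩
  have hNf : N f ∈ ⋃ y ∈ t, {x | dist x y < δ} := hcover ⟨f, hf, rfl⟩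
  simp only [Set.mem_iUnion, Set.mem_setOf_eq] at hNf
  obtain ⟨y, hyt, hdy⟩ := hNf
  refine Set.mem_iUnion₂.mpr ⟨A (pre y), ⟨pre y, ⟨y, hyt, rfl⟩, rfl⟩, ?_⟩
  rw [Metric.mem_ball, dist_eq_norm]
  show ‖A f - A (pre y)‖ < ε
  have hkey := key_ineq N A hA f (pre y)
  have hNd : ‖N f - N (pre y)‖ < δ := by
    rw [hpre2 y hyt]
    rwa [dist_eq_norm] at hdy
  have hfb : ‖f - pre y‖ ≤ 2 := by
    have h1 : ‖f‖ ≤ 1 := by simpa using Metric.mem_closedBall.mp hf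
    have h2 : ‖pre y‖ ≤ 1 := by simpa using Metric.mem_closedBall.mp (hpre1 y hyt)
    calc ‖f - pre y‖ ≤ ‖f‖ + ‖pre y‖ := norm_sub_le _ _
      _ ≤ 2 := by linarith
  have hsq : ‖A f - A (pre y)‖ ^ 2 < ε ^ 2 := by
    calc ‖A f - A (pre y)‖ ^ 2 ≤ ‖f - pre y‖ * ‖N f - N (pre y)‖ := hkey
      _ ≤ 2 * ‖N f - N (pre y)‖ := by
          apply mul_le_mul_of_nonneg_right hfb (norm_nonneg _)
      _ < 2 * δ := by
          apply mul_lt_mul_of_pos_left hNd two_pos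
      _ ≤ ε ^ 2 := by rw [hδdef]; nlinarith
  nlinarith [norm_nonneg (A f - A (pre y)), sq_nonneg (‖A f - A (pre y)‖ - ε)]
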